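/- arXiv:0907.1110 — 5 statements merged into one kernel-verified Lean document; each statement's English description precedes it below -/
import Mathlib

section
/- For the shifted Legendre polynomial P_n and any nonnegative integer k, ∫_0^1 x^k P_n(x) dx = (-1)^n (k!)^2 / ((k-n)! (k+n+1)!) when k ≥ n, and equals 0 when 0 ≤ k < n. -/
open MeasureTheory intervalIntegral Polynomial

noncomputable def shiftedLegendre (n : ℕ) : ℝ → ℝ :=
  fun x => (1 / (n.factorial : ℝ)) * iteratedDeriv n (fun y : ℝ => y ^ n * (1 - y) ^ n) x

lemma iteratedDeriv_poly_eval (j : ℕ) (p : ℝ[X]) :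
    iteratedDeriv j (fun x => p.eval x) = fun x => (derivative^[j] p).eval x := by
  induction j generalizing p with
  | zero => simp
  | succ j ih =>
    rw [iteratedDeriv_succ']
    have : deriv (fun x => p.eval x) = fun x => (derivative p).eval x := by
      funext x; exact Polynomial.deriv p
    rw [this, ih, Function.iterate_succ_apply]

noncomputable def Pn (n : ℕ) : ℝ[X] := X ^ n * (1 - X) ^ n

lemma Pn_ne_zero (n : ℕ) : Pn n ≠ 0 := by
  intro h
  have := congrArg (Polynomial.eval (1/2 : ℝ)) h
  simp [Pn] at this
  exact absurd this.1 (by norm_num)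
lemma root_Pn_zero {n j : ℕ} (h : j < n) : (derivative^[j] (Pn n)).eval 0 = 0 := by
  have hmul : n ≤ rootMultiplicity 0 (Pn n) := by
    rw [Polynomial.le_rootMultiplicity_iff (Pn_ne_zero n)]
    refine ⟨(1 - X) ^ n, ?_⟩
    simp [Pn]
  exact Polynomial.isRoot_iterate_derivative_of_lt_rootMultiplicity (lt_of_lt_of_le h hmul)

lemma root_Pn_one {n j : ℕ} (h : j < n) : (derivative^[j] (Pn n)).eval 1 = 0 := by
  have hmul : n ≤ rootMultiplicity 1 (Pn n) := by
    rw [Polynomial.le_rootMultiplicity_iff (Pn_ne_zero n)]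
    refine ⟨(-1) ^ n * X ^ n, ?_⟩
    rw [Pn]
    simp only [Polynomial.C_1]
    rw [show (1 : ℝ[X]) - X = -(X - 1) by ring, neg_pow]
    ring
  exact Polynomial.isRoot_iterate_derivative_of_lt_rootMultiplicity (lt_of_lt_of_le h hmul)

lemma poly_ibp (p q : ℝ[X]) :
    ∫ x in (0:ℝ)..1, p.eval x * (derivative q).eval x =
      p.eval 1 * q.eval 1 - p.eval 0 * q.eval 0 -
        ∫ x in (0:ℝ)..1, (derivative p).eval x * q.eval x := by
  exact intervalIntegral.integral_mul_deriv_eq_deriv_mul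
    (fun x _ => p.hasDerivAt x) (fun x _ => q.hasDerivAt x)
    ((derivative p).continuous_aeval.intervalIntegrable 0 1)
    ((derivative q).continuous_aeval.intervalIntegrable 0 1)

lemma ibp_chain (n : ℕ) (Q : ℝ[X]) : ∀ {j : ℕ}, j ≤ n →
    (∫ x in (0:ℝ)..1, Q.eval x * (derivative^[n] (Pn n)).eval x) =
      (-1) ^ j * ∫ x in (0:ℝ)..1,
        (derivative^[j] Q).eval x * (derivative^[n - j] (Pn n)).eval x := by
  intro j
  induction j with
  | zero => intro _; simp
  | succ j ih =>
    intro hj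
    have hjn : j < n := hj
    have h1 : n - j = (n - (j + 1)) + 1 := by omega
    rw [ih hjn.le, h1, Function.iterate_succ_apply', poly_ibp,
      root_Pn_zero (show n - (j+1) < n by omega), root_Pn_one (show n - (j+1) < n by omega),
      ← Function.iterate_succ_apply' derivative j Q]
    ring

lemma beta_int : ∀ (b a : ℕ), (∫ x in (0:ℝ)..1, x ^ a * (1 - x) ^ b) =
    (a.factorial * b.factorial : ℝ) / ((a + b + 1).factorial : ℝ) := by
  intro b
  induction b with
  | zero =>
    intro a
    have ha : ((a : ℝ) + 1) ≠ 0 := by positivity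
    simp only [pow_zero, mul_one, integral_pow, one_pow]
    rw [Nat.factorial_zero, Nat.add_zero, Nat.factorial_succ]
    have hfa : ((a.factorial : ℝ)) ≠ 0 := by positivity
    push_cast
    field_simp
    simp
  | succ b ih =>
    intro a
    have ha : ((a : ℝ) + 1) ≠ 0 := by positivity
    have hu : ∀ x ∈ Set.uIcc (0:ℝ) 1, HasDerivAt (fun y : ℝ => (1 - y) ^ (b + 1))
        (-(((b:ℝ) + 1) * (1 - x) ^ b)) x := by
      intro x _
      have h := ((hasDerivAt_id x).const_sub 1).pow (b + 1)
      refine HasDerivAt.congr_deriv (by exact h) ?_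
      push_cast
      ring_nf
      simp
    have hv : ∀ x ∈ Set.uIcc (0:ℝ) 1, HasDerivAt (fun y : ℝ => y ^ (a + 1) / ((a:ℝ) + 1))
        (x ^ a) x := by
      intro x _
      have h := (hasDerivAt_pow (a + 1) x).div_const ((a:ℝ) + 1)
      refine HasDerivAt.congr_deriv h ?_
      push_cast
      field_simp
    have hcomm : (∫ x in (0:ℝ)..1, x ^ a * (1 - x) ^ (b + 1)) =
        ∫ x in (0:ℝ)..1, (1 - x) ^ (b + 1) * x ^ a := by
      refine intervalIntegral.integral_congr fun x _ => by ring
    rw [hcomm, intervalIntegral.integral_mul_deriv_eq_deriv_mul hu hv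
      (((continuous_const.mul ((continuous_const.sub continuous_id).pow b)).neg).intervalIntegrable 0 1)
      ((continuous_pow a).intervalIntegrable 0 1)]
    have hrest : (∫ x in (0:ℝ)..1, -(((b:ℝ) + 1) * (1 - x) ^ b) * (x ^ (a + 1) / ((a:ℝ) + 1))) =
        (-(((b:ℝ) + 1) / ((a:ℝ) + 1))) * ∫ x in (0:ℝ)..1, x ^ (a + 1) * (1 - x) ^ b := by
      rw [← intervalIntegral.integral_const_mul]
      refine intervalIntegral.integral_congr fun x _ => by ring
    rw [hrest, ih (a + 1)]
    have harr : a + 1 + b + 1 = a + (b + 1) + 1 := by omega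
    rw [harr]
    have hf : ((a + (b + 1) + 1).factorial : ℝ) ≠ 0 := by positivity
    simp only [sub_self, zero_pow, Nat.succ_ne_zero, ne_eq, not_false_iff, zero_div,
      Nat.factorial_succ]
    push_cast
    field_simp
    ring

lemma step_main (n k : ℕ) : (∫ x in (0:ℝ)..1, x ^ k * shiftedLegendre n x) =
    (1 / (n.factorial : ℝ)) * ((-1) ^ n *
      ∫ x in (0:ℝ)..1, (k.descFactorial n : ℝ) * x ^ (k - n) * (x ^ n * (1 - x) ^ n)) := by
  have hfun : (fun y : ℝ => y ^ n * (1 - y) ^ n) = fun y => (Pn n).eval y := by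
    funext y; simp [Pn]
  have h1 : (∫ x in (0:ℝ)..1, x ^ k * shiftedLegendre n x) =
      (1 / (n.factorial : ℝ)) *
        ∫ x in (0:ℝ)..1, ((X : ℝ[X]) ^ k).eval x * (derivative^[n] (Pn n)).eval x := by
    rw [← intervalIntegral.integral_const_mul]
    refine intervalIntegral.integral_congr fun x _ => ?_
    simp only [_root_.shiftedLegendre, hfun, iteratedDeriv_poly_eval, Polynomial.eval_pow,
      Polynomial.eval_X]
    ring
  rw [h1, ibp_chain n ((X : ℝ[X]) ^ k) (le_refl n), Nat.sub_self]
  congr 1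
  congr 1
  refine intervalIntegral.integral_congr fun x _ => ?_
  rw [Polynomial.iterate_derivative_X_pow_eq_C_mul]
  simp [Pn]

theorem stmt_1 (n k : ℕ) :
    (n ≤ k →
      ∫ x in (0:ℝ)..1, x ^ k * shiftedLegendre n x =
        (-1) ^ n * ((k.factorial : ℝ)) ^ 2 /
          (((k - n).factorial : ℝ) * ((k + n + 1).factorial : ℝ))) ∧
    (k < n → ∫ x in (0:ℝ)..1, x ^ k * shiftedLegendre n x = 0) := by
  constructor
  · intro hnk
    rw [step_main]
    have hx : (∫ x in (0:ℝ)..1, (k.descFactorial n : ℝ) * x ^ (k - n) * (x ^ n * (1 - x) ^ n)) =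
        (k.descFactorial n : ℝ) * ∫ x in (0:ℝ)..1, x ^ k * (1 - x) ^ n := by
      rw [← intervalIntegral.integral_const_mul]
      refine intervalIntegral.integral_congr fun x _ => ?_
      rw [show x ^ k = x ^ (k - n) * x ^ n by rw [← pow_add, Nat.sub_add_cancel hnk]]
      ring
    rw [hx, beta_int n k]
    have hd : ((k - n).factorial : ℝ) * (k.descFactorial n : ℝ) = (k.factorial : ℝ) := by
      rw [← Nat.cast_mul, Nat.factorial_mul_descFactorial hnk]
    have h1 : ((n.factorial : ℝ)) ≠ 0 := by positivity
    have h2 : (((k - n).factorial : ℝ)) ≠ 0 := by positivity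
    have h3 : (((k + n + 1).factorial : ℝ)) ≠ 0 := by positivity
    have hdesc : (k.descFactorial n : ℝ) = (k.factorial : ℝ) / ((k - n).factorial : ℝ) := by
      field_simp [hd]
      linarith [hd]
    rw [hdesc]
    field_simp
  · intro hkn
    rw [step_main]
    have : (k.descFactorial n : ℝ) = 0 := by
      rw [Nat.descFactorial_eq_zero_iff_lt.2 hkn, Nat.cast_zero]
    simp [this]
end

section
/- For r ≥ 2 and any polynomial R with real coefficients a_0,...,a_n satisfying R(x) = ∑_{l=0}^n a_l x^l, the r-fold integral ∫_{[0,1]^r} (x_1⋯x_r)^z / (1 - x_1⋯x_r) · ∏_{i=1}^r R(x_i) dx equals ∑_{k=0}^∞ (∑_{l=0}^n a_l/(l+k+z+1))^r, for every real z ≥ 0. -/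
open MeasureTheory

theorem stmt_3 (r : ℕ) (hr : 2 ≤ r) (n : ℕ) (a : ℕ → ℝ)
    (R : ℝ → ℝ) (hR : ∀ x, R x = ∑ l ∈ Finset.range (n + 1), a l * x ^ l)
    (z : ℝ) (hz : 0 ≤ z) :
    ∫ x in Set.univ.pi (fun _ : Fin r => Set.Ioo (0:ℝ) 1),
        (∏ i, x i) ^ z / (1 - ∏ i, x i) * ∏ i, R (x i) =
      ∑' k : ℕ, (∑ l ∈ Finset.range (n + 1), a l / (l + k + z + 1)) ^ r := by
  have hRcont : Continuous R := by
    have : R = fun x => ∑ l ∈ Finset.range (n + 1), a l * x ^ l := funext hR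
    rw [this]; fun_prop
  set C : ℝ := ∑ l ∈ Finset.range (n + 1), |a l| with hC
  have hC0 : 0 ≤ C := Finset.sum_nonneg fun l _ => abs_nonneg _
  have hRb : ∀ x ∈ Set.Icc (0:ℝ) 1, |R x| ≤ C := by
    intro x hx
    rw [hR]
    refine (Finset.abs_sum_le_sum_abs _ _).trans (Finset.sum_le_sum fun l _ => ?_)
    rw [abs_mul, abs_pow]
    calc |a l| * |x| ^ l ≤ |a l| * 1 := by
          refine mul_le_mul_of_nonneg_left (pow_le_one₀ (abs_nonneg _) ?_) (abs_nonneg _)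
          rw [abs_le]; constructor <;> linarith [hx.1, hx.2]
      _ = |a l| := mul_one _
  set g : ℕ → ℝ → ℝ := fun k x => x ^ (z + k) * R x with hg
  have hgcont : ∀ k, Continuous (g k) := by
    intro k
    refine Continuous.mul ?_ hRcont
    exact continuous_iff_continuousAt.2 fun x =>
      Real.continuousAt_rpow_const x _ (Or.inr (by positivity))
  have hgint : ∀ k, IntegrableOn (g k) (Set.Ioo (0:ℝ) 1) :=
    fun k => (((hgcont k).continuousOn).integrableOn_Icc).mono_set Set.Ioo_subset_Icc_self
  set h : ℕ → ℝ → ℝ := fun k => (Set.Ioo (0:ℝ) 1).indicator (g k) with hh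
  have hhint : ∀ k, Integrable (h k) := fun k =>
    (integrable_indicator_iff measurableSet_Ioo).2 (hgint k)
  set F : ℕ → (Fin r → ℝ) → ℝ := fun k x => ∏ i, h k (x i) with hF
  have hFint : ∀ k, Integrable (F k) := fun k => Integrable.fintype_prod fun _ => hhint k
  -- 1-d integral value
  set I : ℕ → ℝ := fun k => ∫ x in Set.Ioo (0:ℝ) 1, g k x with hI
  have rpow_eval : ∀ c : ℝ, 0 ≤ c → ∫ x in Set.Ioo (0:ℝ) 1, x ^ c = 1 / (c + 1) := by
    intro c hc
    rw [← integral_Ioc_eq_integral_Ioo, ← intervalIntegral.integral_of_le zero_le_one,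
      integral_rpow (Or.inl (by linarith))]
    rw [Real.one_rpow, Real.zero_rpow (by positivity)]
    ring
  have keyI : ∀ k : ℕ, I k = ∑ l ∈ Finset.range (n + 1), a l / (l + k + z + 1) := by
    intro k
    have hcong : ∀ x ∈ Set.Ioo (0:ℝ) 1, g k x
        = ∑ l ∈ Finset.range (n + 1), a l * x ^ (z + k + l) := by
      intro x hx
      rw [hg]; simp only
      rw [hR, Finset.mul_sum]
      refine Finset.sum_congr rfl fun l _ => ?_
      have hxl : x ^ (z + (k:ℝ) + l) = x ^ (z + (k:ℝ)) * x ^ (l:ℕ) := by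
        rw [Real.rpow_add hx.1, Real.rpow_natCast]
      rw [hxl]; ring
    rw [hI]; simp only
    rw [setIntegral_congr_fun measurableSet_Ioo hcong]
    rw [integral_finset_sum]
    · refine Finset.sum_congr rfl fun l _ => ?_
      rw [integral_const_mul, rpow_eval _ (by positivity)]
      rw [mul_one_div]
      congr 1
      ring
    · intro l _
      refine Integrable.const_mul ?_ _
      have : Continuous fun x : ℝ => x ^ (z + k + l) :=
        continuous_iff_continuousAt.2 fun x =>
          Real.continuousAt_rpow_const x _ (Or.inr (by positivity))
      exact ((this.continuousOn).integrableOn_Icc).mono_set Set.Ioo_subset_Icc_self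
  -- norm integral bound
  set J : ℕ → ℝ := fun k => ∫ x in Set.Ioo (0:ℝ) 1, |g k x| with hJ
  have hJ0 : ∀ k, 0 ≤ J k := fun k => integral_nonneg fun x => abs_nonneg _
  have hJle : ∀ k : ℕ, J k ≤ C * (1 / (k + 1)) := by
    intro k
    have hb : ∀ x ∈ Set.Ioo (0:ℝ) 1, |g k x| ≤ C * x ^ k := by
      intro x hx
      rw [hg]; simp only [abs_mul]
      rw [abs_of_nonneg (Real.rpow_nonneg hx.1.le _)]
      calc x ^ (z + (k:ℝ)) * |R x|
          ≤ x ^ (k:ℝ) * C := by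
            refine mul_le_mul ?_ (hRb x ⟨hx.1.le, hx.2.le⟩) (abs_nonneg _)
              (Real.rpow_nonneg hx.1.le _)
            exact Real.rpow_le_rpow_of_exponent_ge hx.1 hx.2.le (by linarith)
        _ = C * x ^ k := by rw [Real.rpow_natCast]; ring
    have hint2 : IntegrableOn (fun x : ℝ => C * x ^ k) (Set.Ioo (0:ℝ) 1) := by
      refine Integrable.const_mul ?_ _
      exact (((continuous_pow k).continuousOn).integrableOn_Icc).mono_set
        Set.Ioo_subset_Icc_self
    calc J k ≤ ∫ x in Set.Ioo (0:ℝ) 1, C * x ^ k :=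
          setIntegral_mono_on ((hgint k).abs) hint2 measurableSet_Ioo hb
      _ = C * (1 / (k + 1)) := by
          rw [integral_const_mul]
          congr 1
          rw [← rpow_eval (k : ℝ) (Nat.cast_nonneg k)]
          refine setIntegral_congr_fun measurableSet_Ioo fun x hx => ?_
          exact (Real.rpow_natCast x k).symm
  -- summability
  have hsum : Summable fun k : ℕ => (J k) ^ r := by
    have h3 : Summable fun k : ℕ => (1:ℝ) / ((k + 1 : ℕ) : ℝ) ^ 2 :=
      (summable_nat_add_iff (f := fun k : ℕ => (1:ℝ) / (k:ℝ) ^ 2) 1).2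
        (Real.summable_one_div_nat_pow.2 one_lt_two)
    have h4 : Summable fun k : ℕ => (1:ℝ) / ((k:ℝ) + 1) ^ 2 :=
      h3.congr fun k => by push_cast; ring
    have h2 : Summable fun k : ℕ => C ^ r * ((1:ℝ) / ((k:ℝ) + 1)) ^ 2 := by
      refine (h4.mul_left (C ^ r)).congr fun k => ?_
      rw [div_pow, one_pow]
    refine Summable.of_nonneg_of_le (fun k => pow_nonneg (hJ0 k) r) (fun k => ?_) h2
    calc (J k) ^ r ≤ (C * (1 / ((k:ℝ) + 1))) ^ r := pow_le_pow_left₀ (hJ0 k) (hJle k) r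
      _ = C ^ r * ((1:ℝ) / ((k:ℝ) + 1)) ^ r := mul_pow _ _ _
      _ ≤ C ^ r * ((1:ℝ) / ((k:ℝ) + 1)) ^ 2 := by
          refine mul_le_mul_of_nonneg_left ?_ (pow_nonneg hC0 r)
          refine pow_le_pow_of_le_one (by positivity) ?_ hr
          rw [div_le_one (by positivity)]
          have : (0:ℝ) ≤ (k:ℝ) := Nat.cast_nonneg k
          linarith
  -- norm integral identity
  have hnorm : ∀ k : ℕ, (∫ x : Fin r → ℝ, ‖F k x‖) = (J k) ^ r := by
    intro k
    have habs : (fun x : ℝ => |h k x|)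
        = (Set.Ioo (0:ℝ) 1).indicator fun x => |g k x| := by
      funext x
      by_cases hx : x ∈ Set.Ioo (0:ℝ) 1 <;>
        simp [hh, Set.indicator_of_mem, Set.indicator_of_notMem, hx]
    have h1 : ∀ x : Fin r → ℝ, ‖F k x‖ = ∏ i, |h k (x i)| := by
      intro x
      rw [hF]; simp only [Real.norm_eq_abs, Finset.abs_prod]
    calc (∫ x : Fin r → ℝ, ‖F k x‖) = ∫ x : Fin r → ℝ, ∏ i, |h k (x i)| := by
          exact integral_congr_ae (Filter.Eventually.of_forall h1)
      _ = (∫ x : ℝ, |h k x|) ^ (Fintype.card (Fin r)) :=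
          MeasureTheory.integral_fintype_prod_eq_pow (ι := Fin r) fun x => |h k x|
      _ = (J k) ^ r := by
          rw [Fintype.card_fin, habs, integral_indicator measurableSet_Ioo]
  have hsumnorm : Summable fun k : ℕ => ∫ x : Fin r → ℝ, ‖F k x‖ :=
    hsum.congr fun k => (hnorm k).symm
  -- Fubini for each k
  have hFval : ∀ k : ℕ, (∫ x : Fin r → ℝ, F k x) = (I k) ^ r := by
    intro k
    calc (∫ x : Fin r → ℝ, F k x) = (∫ x : ℝ, h k x) ^ (Fintype.card (Fin r)) :=
          MeasureTheory.integral_fintype_prod_eq_pow (ι := Fin r) (h k)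
      _ = (I k) ^ r := by
          rw [Fintype.card_fin, hh]
          congr 1
          exact integral_indicator measurableSet_Ioo
  -- pointwise identity
  haveI : Nonempty (Fin r) := ⟨⟨0, by omega⟩⟩
  set cube : Set (Fin r → ℝ) := Set.univ.pi fun _ : Fin r => Set.Ioo (0:ℝ) 1 with hcube
  have hcubemeas : MeasurableSet cube := MeasurableSet.univ_pi fun _ => measurableSet_Ioo
  set f : (Fin r → ℝ) → ℝ :=
    fun x => (∏ i, x i) ^ z / (1 - ∏ i, x i) * ∏ i, R (x i) with hfdef
  have hptwise : ∀ x : Fin r → ℝ, ∑' k : ℕ, F k x = cube.indicator f x := by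
    intro x
    by_cases hx : x ∈ cube
    · have hxi : ∀ i, x i ∈ Set.Ioo (0:ℝ) 1 := fun i => hx i (Set.mem_univ i)
      rw [Set.indicator_of_mem hx]
      have hp0 : 0 < ∏ i, x i := Finset.prod_pos fun i _ => (hxi i).1
      have hp1 : ∏ i, x i < 1 := by
        have := Finset.prod_lt_prod_of_nonempty (f := fun i : Fin r => x i)
          (g := fun _ : Fin r => (1:ℝ)) (fun i _ => (hxi i).1) (fun i _ => (hxi i).2)
          Finset.univ_nonempty
        simpa using this
      have hFk : ∀ k : ℕ, F k x
          = ((∏ i, x i) ^ z * ∏ i, R (x i)) * (∏ i, x i) ^ k := by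
        intro k
        rw [hF]; simp only
        rw [Finset.prod_congr rfl fun i _ => Set.indicator_of_mem (hxi i) (g k)]
        rw [hg]; simp only
        rw [Finset.prod_mul_distrib, Real.finset_prod_rpow _ _ (fun i _ => (hxi i).1.le)]
        rw [Real.rpow_add hp0, Real.rpow_natCast]
        ring
      calc ∑' k : ℕ, F k x
          = ∑' k : ℕ, ((∏ i, x i) ^ z * ∏ i, R (x i)) * (∏ i, x i) ^ k := tsum_congr hFk
        _ = ((∏ i, x i) ^ z * ∏ i, R (x i)) * ∑' k : ℕ, (∏ i, x i) ^ k := tsum_mul_left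
        _ = ((∏ i, x i) ^ z * ∏ i, R (x i)) * (1 - ∏ i, x i)⁻¹ := by
            rw [tsum_geometric_of_lt_one hp0.le hp1]
        _ = f x := by rw [hfdef]; simp only [div_eq_mul_inv]; ring
    · rw [Set.indicator_of_notMem hx]
      have h0 : ∀ k : ℕ, F k x = 0 := by
        intro k
        obtain ⟨i, hi⟩ : ∃ i, x i ∉ Set.Ioo (0:ℝ) 1 := by
          by_contra hcon
          push_neg at hcon
          exact hx fun i _ => hcon i
        rw [hF]; simp only
        exact Finset.prod_eq_zero (Finset.mem_univ i) (Set.indicator_of_notMem hi _)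
      simp [h0]
  -- assemble
  calc ∫ x in cube, f x = ∫ x : Fin r → ℝ, cube.indicator f x :=
        (integral_indicator hcubemeas).symm
    _ = ∫ x : Fin r → ℝ, ∑' k : ℕ, F k x :=
        integral_congr_ae (Filter.Eventually.of_forall fun x => (hptwise x).symm)
    _ = ∑' k : ℕ, ∫ x : Fin r → ℝ, F k x :=
        (integral_tsum_of_summable_integral_norm hFint hsumnorm).symm
    _ = ∑' k : ℕ, (∑ l ∈ Finset.range (n + 1), a l / (l + k + z + 1)) ^ r := by
        refine tsum_congr fun k => ?_
        rw [hFval k, keyI k]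
end

section
/- Beukers' double integral: ∫_0^1 ∫_0^1 (-log(xy))/(1-xy) dx dy = 2ζ(3), where ζ is the Riemann zeta function. -/
open MeasureTheory intervalIntegral

namespace Beukers7

open Set Real

noncomputable def FF (n : ℕ) (x : ℝ) : ℝ :=
  x ^ (n+1) / ((n:ℝ)+1)^2 - x ^ (n+1) * Real.log x / ((n:ℝ)+1)

lemma cont_pow_mul_log (n : ℕ) : Continuous fun x : ℝ => x ^ (n+1) * Real.log x := by
  have h : (fun x : ℝ => x ^ (n+1) * Real.log x) = fun x => -(x ^ n * Real.negMulLog x) := by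
    funext x; simp [Real.negMulLog]; ring
  rw [h]
  exact ((continuous_pow n).mul Real.continuous_negMulLog).neg

lemma FF_cont (n : ℕ) : Continuous (FF n) := by
  unfold FF
  exact ((continuous_pow (n+1)).div_const _).sub ((cont_pow_mul_log n).div_const _)

lemma FF_deriv (n : ℕ) {x : ℝ} (hx : x ∈ Ioo (0:ℝ) 1) :
    HasDerivAt (FF n) (x ^ n * (-Real.log x)) x := by
  have hx0 : x ≠ 0 := ne_of_gt hx.1
  have h1 : HasDerivAt (fun x : ℝ => x ^ (n+1)) (((n:ℝ)+1) * x ^ n) x := by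
    simpa using hasDerivAt_pow (n+1) x
  have hlog : HasDerivAt Real.log x⁻¹ x := Real.hasDerivAt_log hx0
  have h2 : HasDerivAt (fun x : ℝ => x ^ (n+1) * Real.log x)
      (((n:ℝ)+1) * x ^ n * Real.log x + x ^ (n+1) * x⁻¹) x := h1.mul hlog
  have := (h1.div_const (((n:ℝ)+1)^2)).sub (h2.div_const ((n:ℝ)+1))
  refine HasDerivAt.congr_deriv (f := FF n) this ?_
  have hn : ((n:ℝ)+1) ≠ 0 := by positivity
  field_simp
  ring

lemma nn (n : ℕ) {x : ℝ} (hx : x ∈ Ioo (0:ℝ) 1) : 0 ≤ x ^ n * (-Real.log x) := by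
  have h1 := Real.log_nonpos hx.1.le hx.2.le
  have h2 : (0:ℝ) ≤ x ^ n := pow_nonneg hx.1.le n
  nlinarith

lemma A_int (n : ℕ) : IntegrableOn (fun x : ℝ => x ^ n * (-Real.log x)) (Ioo 0 1) volume := by
  exact (intervalIntegral.integrableOn_deriv_of_nonneg (FF_cont n).continuousOn
    (fun x hx => FF_deriv n hx) (fun x hx => nn n hx)).mono_set Ioo_subset_Ioc_self

lemma A_eq (n : ℕ) :
    ∫ x in Ioo (0:ℝ) 1, x ^ n * (-Real.log x) = 1/((n:ℝ)+1)^2 := by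
  have hii : IntervalIntegrable (fun x : ℝ => x ^ n * (-Real.log x)) volume 0 1 := by
    rw [intervalIntegrable_iff_integrableOn_Ioo_of_le (by norm_num)]
    exact A_int n
  have h := intervalIntegral.integral_eq_sub_of_hasDeriv_right_of_le (by norm_num : (0:ℝ) ≤ 1)
    ((FF_cont n).continuousOn) (fun x hx => (FF_deriv n hx).hasDerivWithinAt) hii
  rw [intervalIntegral.integral_of_le (by norm_num : (0:ℝ) ≤ 1),
    MeasureTheory.integral_Ioc_eq_integral_Ioo] at h
  rw [h]
  simp [FF, Real.log_zero, zero_pow (Nat.succ_ne_zero n)]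

lemma B_int (n : ℕ) : IntegrableOn (fun x : ℝ => x ^ n) (Ioo 0 1) volume := by
  have h : IntervalIntegrable (fun x : ℝ => x ^ n) volume 0 1 :=
    (continuous_pow n).intervalIntegrable 0 1
  rwa [intervalIntegrable_iff_integrableOn_Ioo_of_le (by norm_num)] at h

lemma B_eq (n : ℕ) : ∫ x in Ioo (0:ℝ) 1, x ^ n = 1/((n:ℝ)+1) := by
  have h := integral_pow (a := (0:ℝ)) (b := 1) n
  rw [intervalIntegral.integral_of_le (by norm_num : (0:ℝ) ≤ 1),
    MeasureTheory.integral_Ioc_eq_integral_Ioo] at h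
  rw [h]
  simp

noncomputable def g (k : ℕ) (x : ℝ) : ℝ :=
  x ^ k * (-Real.log x) / ((k:ℝ)+1) + x ^ k / ((k:ℝ)+1)^2

lemma g_nonneg (k : ℕ) {x : ℝ} (hx : x ∈ Ioo (0:ℝ) 1) : 0 ≤ g k x := by
  have h1 := nn k hx
  have h2 : (0:ℝ) ≤ x ^ k := pow_nonneg hx.1.le k
  have h3 : (0:ℝ) < (k:ℝ)+1 := by positivity
  unfold g; positivity

lemma g_summable {x : ℝ} (hx : x ∈ Ioo (0:ℝ) 1) : Summable (fun k => g k x) := by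
  have hgeo : Summable (fun k : ℕ => x ^ k * ((-Real.log x) + 1)) :=
    (summable_geometric_of_lt_one hx.1.le hx.2).mul_right _
  refine Summable.of_nonneg_of_le (fun k => g_nonneg k hx) (fun k => ?_) hgeo
  have h2 : (0:ℝ) ≤ x ^ k := pow_nonneg hx.1.le k
  have hlx : (0:ℝ) ≤ -Real.log x := by
    have := Real.log_nonpos hx.1.le hx.2.le; linarith
  have h1 : x ^ k * (-Real.log x) / ((k:ℝ)+1) ≤ x ^ k * (-Real.log x) :=
    div_le_self (by positivity) (by linarith [Nat.cast_nonneg (α := ℝ) k])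
  have h4 : (1:ℝ) ≤ ((k:ℝ)+1)^2 := by nlinarith [Nat.cast_nonneg (α := ℝ) k]
  have h3 : x ^ k / ((k:ℝ)+1)^2 ≤ x ^ k := div_le_self h2 h4
  unfold g
  nlinarith

lemma inner_eq {x : ℝ} (hx : x ∈ Ioo (0:ℝ) 1) :
    ∫ y in Ioo (0:ℝ) 1, (-Real.log (x*y))/(1-x*y) = ∑' k : ℕ, g k x := by
  set F : ℕ → ℝ → ℝ := fun k y => x ^ k * ((-Real.log x) * y ^ k + y ^ k * (-Real.log y)) with hF
  have hF_int : ∀ k, Integrable (F k) (volume.restrict (Ioo (0:ℝ) 1)) := fun k =>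
    (((B_int k).const_mul (-Real.log x)).add (A_int k)).const_mul _
  have hFnn : ∀ k, ∀ y ∈ Ioo (0:ℝ) 1, 0 ≤ F k y := by
    intro k y hy
    have h1 := nn k hy
    have h2 : (0:ℝ) ≤ y ^ k := pow_nonneg hy.1.le k
    have h3 : (0:ℝ) ≤ x ^ k := pow_nonneg hx.1.le k
    have hlx : (0:ℝ) ≤ -Real.log x := by
      have := Real.log_nonpos hx.1.le hx.2.le; linarith
    have : 0 ≤ (-Real.log x) * y ^ k + y ^ k * (-Real.log y) := by nlinarith
    exact mul_nonneg h3 this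
  have hFval : ∀ k, ∫ y in Ioo (0:ℝ) 1, F k y = g k x := by
    intro k
    rw [hF]
    simp only []
    rw [MeasureTheory.integral_const_mul, integral_add ((B_int k).const_mul _) (A_int k),
      MeasureTheory.integral_const_mul, B_eq, A_eq]
    unfold g; ring
  have hFnorm : ∀ k, ∫ y in Ioo (0:ℝ) 1, ‖F k y‖ = g k x := by
    intro k
    rw [setIntegral_congr_fun measurableSet_Ioo (fun y hy => Real.norm_of_nonneg (hFnn k y hy))]
    exact hFval k
  have hsum : Summable (fun k => ∫ y in Ioo (0:ℝ) 1, ‖F k y‖) := by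
    simpa only [hFnorm] using g_summable hx
  have key := integral_tsum_of_summable_integral_norm hF_int hsum
  have hpt : ∀ y ∈ Ioo (0:ℝ) 1, (-Real.log (x*y))/(1-x*y) = ∑' k : ℕ, F k y := by
    intro y hy
    have hxy0 : (0:ℝ) ≤ x*y := mul_nonneg hx.1.le hy.1.le
    have hxy1 : x*y < 1 := by nlinarith [hx.1, hx.2, hy.1, hy.2]
    have h1 : ∀ k : ℕ, F k y = (x*y)^k * (-Real.log (x*y)) := by
      intro k
      rw [hF]; simp only []
      rw [Real.log_mul hx.1.ne' hy.1.ne', mul_pow]; ring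
    rw [tsum_congr h1, tsum_mul_right, tsum_geometric_of_lt_one hxy0 hxy1, inv_mul_eq_div]
  rw [setIntegral_congr_fun measurableSet_Ioo hpt, ← key]
  exact tsum_congr hFval

lemma cube_summable : Summable (fun k : ℕ => 2/((k:ℝ)+1)^3) := by
  have h0 : Summable (fun n : ℕ => 1/(n:ℝ)^3) :=
    Real.summable_one_div_nat_pow.2 (by norm_num)
  have h1 := (summable_nat_add_iff 1).2 h0
  have h2 : (fun k : ℕ => 1/((k:ℝ)+1)^3) = fun k : ℕ => 1/(((k+1:ℕ)):ℝ)^3 := by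
    funext k; push_cast; ring
  have h3 : Summable (fun k : ℕ => 1/((k:ℝ)+1)^3) := by rw [h2]; exact h1
  simpa [div_eq_mul_inv, mul_comm] using h3.mul_left 2

lemma g_int (k : ℕ) : Integrable (g k) (volume.restrict (Ioo (0:ℝ) 1)) :=
  ((A_int k).div_const _).add ((B_int k).div_const _)

lemma g_val (k : ℕ) : ∫ x in Ioo (0:ℝ) 1, g k x = 2/((k:ℝ)+1)^3 := by
  unfold g
  rw [integral_add ((A_int k).div_const _) ((B_int k).div_const _),
    MeasureTheory.integral_div, MeasureTheory.integral_div, A_eq, B_eq]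
  have : ((k:ℝ)+1) ≠ 0 := by positivity
  field_simp
  ring

lemma outer_eq :
    ∫ x in Ioo (0:ℝ) 1, (∑' k : ℕ, g k x) = ∑' k : ℕ, 2/((k:ℝ)+1)^3 := by
  have hnorm : ∀ k, ∫ x in Ioo (0:ℝ) 1, ‖g k x‖ = 2/((k:ℝ)+1)^3 := by
    intro k
    rw [setIntegral_congr_fun measurableSet_Ioo (fun x hx => Real.norm_of_nonneg (g_nonneg k hx))]
    exact g_val k
  have hsum : Summable (fun k => ∫ x in Ioo (0:ℝ) 1, ‖g k x‖) := by
    simpa only [hnorm] using cube_summable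
  have key := integral_tsum_of_summable_integral_norm g_int hsum
  rw [← key]
  exact tsum_congr g_val

lemma real_sum : ∑' k : ℕ, 2/((k:ℝ)+1)^3 = 2 * ∑' n : ℕ, 1/(n:ℝ)^3 := by
  have h0 : Summable (fun n : ℕ => 2/(n:ℝ)^3) := by
    have := (Real.summable_one_div_nat_pow.2 (by norm_num : 1 < 3)).mul_left 2
    simpa [div_eq_mul_inv] using this
  have h := Summable.tsum_eq_zero_add h0
  rw [show (2:ℝ)/((0:ℕ):ℝ)^3 = 0 by norm_num] at h
  rw [zero_add] at h
  have h2 : (fun k : ℕ => 2/(((k+1:ℕ)):ℝ)^3) = fun k : ℕ => 2/((k:ℝ)+1)^3 := by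
    funext k; push_cast; ring_nf
  rw [h2] at h
  rw [← h, ← tsum_mul_left]
  congr 1; funext n; ring

end Beukers7

open Set Beukers7 in
theorem stmt_7 :
    ((∫ x in (0:ℝ)..1, ∫ y in (0:ℝ)..1, (-Real.log (x * y)) / (1 - x * y) : ℝ) : ℂ) =
      2 * riemannZeta 3 := by
  have hcong : EqOn (fun x : ℝ => ∫ y in (0:ℝ)..1, (-Real.log (x*y))/(1-x*y))
      (fun x => ∑' k : ℕ, g k x) (Ioo 0 1) := by
    intro x hx
    simp only
    rw [intervalIntegral.integral_of_le zero_le_one,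
      MeasureTheory.integral_Ioc_eq_integral_Ioo]
    exact inner_eq hx
  have hIoo : (∫ x in (0:ℝ)..1, ∫ y in (0:ℝ)..1, (-Real.log (x*y))/(1-x*y))
      = ∑' k : ℕ, 2/((k:ℝ)+1)^3 := by
    rw [intervalIntegral.integral_of_le zero_le_one,
      MeasureTheory.integral_Ioc_eq_integral_Ioo,
      setIntegral_congr_fun measurableSet_Ioo hcong, outer_eq]
  rw [hIoo, real_sum]
  rw [show (3:ℂ) = ((3:ℕ):ℂ) by norm_num, zeta_nat_eq_tsum_of_gt_one (by norm_num)]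
  have hz : ∑' n : ℕ, 1/(n:ℂ)^3 = ((∑' n : ℕ, 1/(n:ℝ)^3 : ℝ) : ℂ) := by
    rw [Complex.ofReal_tsum]
    congr 1; funext n; push_cast; ring
  rw [hz]
  push_cast
  ring
end

section
/- For r ≥ 2 and v ≥ 0, ∫_{[0,1]^r} (-log(x_1⋯x_r))^v/(1 - x_1⋯x_r) dx_1⋯dx_r = (∑-free closed form) (v+r-1)!/(r-1)! · ζ(v+r). -/
open MeasureTheory

open scoped ENNReal

set_option maxHeartbeats 1000000

noncomputable section

namespace Stmt9Aux

open Real Set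


lemma img_exp_neg : (fun t : ℝ => Real.exp (-t)) '' (Set.Ioi 0) = Set.Ioo (0:ℝ) 1 := by
  ext u
  constructor
  · rintro ⟨t, ht, rfl⟩
    exact ⟨Real.exp_pos _, by rw [Real.exp_lt_one_iff]; simpa using Set.mem_Ioi.1 ht⟩
  · rintro ⟨h0, h1⟩
    exact ⟨-Real.log u, by simpa using Real.log_neg h0 h1, by simp [Real.exp_log h0]⟩

lemma deriv_exp_neg (t : ℝ) (s : Set ℝ) :
    HasDerivWithinAt (fun t : ℝ => Real.exp (-t)) (-Real.exp (-t)) s t := by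
  have h : HasDerivAt (fun t : ℝ => Real.exp (-t)) (Real.exp (-t) * (-1)) t :=
    (Real.hasDerivAt_exp (-t)).comp t (hasDerivAt_neg t)
  simpa using h.hasDerivWithinAt

lemma inj_exp_neg : Set.InjOn (fun t : ℝ => Real.exp (-t)) (Set.Ioi 0) := fun a _ b _ h => by
  have := Real.exp_injective h
  linarith

lemma integrableOn_moment (k m : ℕ) :
    IntegrableOn (fun u : ℝ => u ^ k * (-Real.log u) ^ m) (Set.Ioo (0:ℝ) 1) := by
  rw [← img_exp_neg,
    integrableOn_image_iff_integrableOn_abs_deriv_smul measurableSet_Ioi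
      (fun t _ => deriv_exp_neg t _) inj_exp_neg]
  have base : IntegrableOn (fun t : ℝ => t ^ (m:ℝ) * Real.exp (-((k:ℝ)+1) * t)) (Set.Ioi 0) := by
    have := integrableOn_rpow_mul_exp_neg_mul_rpow (p := 1) (s := (m:ℝ)) (b := (k:ℝ)+1)
      (lt_of_lt_of_le (by norm_num) (Nat.cast_nonneg m)) one_pos (by positivity)
    simpa [Real.rpow_one] using this
  apply (base.congr_fun ?_ measurableSet_Ioi)
  intro t ht
  have ht' : (0:ℝ) < t := ht
  have habs : |(-Real.exp (-t))| = Real.exp (-t) := by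
    rw [abs_neg, abs_of_pos (Real.exp_pos _)]
  simp only [smul_eq_mul, habs, Real.log_exp]
  rw [Real.rpow_natCast, ← Real.exp_nat_mul]
  rw [show -(((k:ℝ)+1)) * t = -t + -((k:ℝ)*t) by ring, Real.exp_add]
  rw [show ((k:ℕ):ℝ) * -t = -((k:ℝ)*t) by push_cast; ring]
  ring

lemma moment_value (k m : ℕ) :
    ∫ u in Set.Ioo (0:ℝ) 1, u ^ k * (-Real.log u) ^ m
      = (m.factorial : ℝ) / ((k:ℝ)+1) ^ (m+1) := by
  rw [← img_exp_neg,
    integral_image_eq_integral_abs_deriv_smul measurableSet_Ioi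
      (fun t _ => deriv_exp_neg t _) inj_exp_neg]
  have : ∀ t ∈ Set.Ioi (0:ℝ),
      |(-Real.exp (-t))| • ((Real.exp (-t)) ^ k * (-Real.log (Real.exp (-t))) ^ m)
        = t ^ (((m:ℝ)+1) - 1) * Real.exp (-(((k:ℝ)+1) * t)) := by
    intro t ht
    have habs : |(-Real.exp (-t))| = Real.exp (-t) := by
      rw [abs_neg, abs_of_pos (Real.exp_pos _)]
    simp only [smul_eq_mul, habs, Real.log_exp]
    rw [show ((m:ℝ)+1) - 1 = (m:ℝ) by ring, Real.rpow_natCast, ← Real.exp_nat_mul]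
    rw [show -(((k:ℝ)+1) * t) = -t + -((k:ℝ)*t) by ring, Real.exp_add]
    rw [show ((k:ℕ):ℝ) * -t = -((k:ℝ)*t) by push_cast; ring]
    ring
  rw [setIntegral_congr_fun measurableSet_Ioi this,
    integral_rpow_mul_exp_neg_mul_Ioi (by positivity) (by positivity)]
  have hg : Real.Gamma ((m:ℝ)+1) = m.factorial := Real.Gamma_nat_eq_factorial m
  have hp : (1/((k:ℝ)+1)) ^ ((m:ℝ)+1) = (1/((k:ℝ)+1)) ^ ((m+1:ℕ)) := by
    rw [← Real.rpow_natCast]; norm_num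
  rw [hp, hg, div_pow, one_pow]
  ring

lemma lmoment (k m : ℕ) :
    ∫⁻ u in Set.Ioo (0:ℝ) 1, ENNReal.ofReal (u ^ k * (-Real.log u) ^ m)
      = ENNReal.ofReal ((m.factorial : ℝ) / ((k:ℝ)+1) ^ (m+1)) := by
  rw [← ofReal_integral_eq_lintegral_ofReal (integrableOn_moment k m) ?_, moment_value]
  filter_upwards [ae_restrict_mem measurableSet_Ioo] with u hu
  have h1 : 0 < -Real.log u := by
    have := Real.log_neg hu.1 hu.2; linarith
  have := hu.1
  positivity

lemma ftc_piece (n : ℕ) {t : ℝ} (ht : 0 < t) (ht1 : t < 1) :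
    ∫⁻ x in Set.Ioo t 1, ENNReal.ofReal (x⁻¹ * ((Real.log x - Real.log t) ^ n / n.factorial))
      = ENNReal.ofReal ((-Real.log t) ^ (n+1) / (n+1).factorial) := by
  have hcont : ContinuousOn (fun x : ℝ => x⁻¹ * ((Real.log x - Real.log t) ^ n / n.factorial))
      (Set.Icc t 1) := by
    apply ContinuousOn.mul
    · exact continuousOn_inv₀.mono (fun x hx => ne_of_gt (lt_of_lt_of_le ht hx.1))
    · exact (((Real.continuousOn_log.mono (fun x hx => ne_of_gt (lt_of_lt_of_le ht hx.1))).sub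
        continuousOn_const).pow n).div_const _
  have hint : IntegrableOn (fun x : ℝ => x⁻¹ * ((Real.log x - Real.log t) ^ n / n.factorial))
      (Set.Ioc t 1) := (hcont.integrableOn_Icc).mono_set Set.Ioc_subset_Icc_self
  rw [show (volume.restrict (Set.Ioo t 1)) = (volume.restrict (Set.Ioc t 1)) from
    Measure.restrict_congr_set Ioo_ae_eq_Ioc]
  rw [← ofReal_integral_eq_lintegral_ofReal hint ?_]
  · congr 1
    have hFTC : ∫ x in t..1, x⁻¹ * ((Real.log x - Real.log t) ^ n / n.factorial)
        = (-Real.log t) ^ (n+1) / (n+1).factorial := by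
      have hderiv : ∀ x ∈ Set.uIcc t 1,
          HasDerivAt (fun x : ℝ => (Real.log x - Real.log t) ^ (n+1) / (n+1).factorial)
            (x⁻¹ * ((Real.log x - Real.log t) ^ n / n.factorial)) x := by
        intro x hx
        rw [Set.uIcc_of_le ht1.le] at hx
        have hx0 : x ≠ 0 := ne_of_gt (lt_of_lt_of_le ht hx.1)
        have h1 : HasDerivAt (fun x : ℝ => Real.log x - Real.log t) x⁻¹ x := by
          simpa using (Real.hasDerivAt_log hx0).sub_const (Real.log t)
        have h2 := (h1.fun_pow (n+1)).div_const ((n+1).factorial : ℝ)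
        refine h2.congr_deriv (Eq.symm ?_)
        rw [Nat.factorial_succ]
        push_cast
        field_simp
      have hii : IntervalIntegrable
          (fun x : ℝ => x⁻¹ * ((Real.log x - Real.log t) ^ n / n.factorial)) volume t 1 := by
        rw [intervalIntegrable_iff_integrableOn_Ioc_of_le ht1.le]
        exact hint
      rw [intervalIntegral.integral_eq_sub_of_hasDerivAt hderiv hii]
      simp [Real.log_one]
    rw [← hFTC, intervalIntegral.integral_of_le ht1.le]
  · filter_upwards [ae_restrict_mem measurableSet_Ioc] with x hx
    have : Real.log t ≤ Real.log x := Real.log_le_log ht hx.1.le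
    have hx0 : 0 < x := lt_of_lt_of_le ht hx.1.le
    exact mul_nonneg (inv_nonneg.2 hx0.le)
      (div_nonneg (pow_nonneg (by linarith) n) (Nat.cast_nonneg _))

lemma restrict_pi_cube (r : ℕ) :
    (volume : Measure (Fin r → ℝ)).restrict (Set.univ.pi fun _ => Set.Ioo (0:ℝ) 1)
      = Measure.pi (fun _ : Fin r => volume.restrict (Set.Ioo (0:ℝ) 1)) := by
  refine (Measure.pi_eq fun s hs => ?_).symm
  rw [Measure.restrict_apply (MeasurableSet.univ_pi hs)]
  have h : (Set.univ.pi s) ∩ (Set.univ.pi fun _ => Set.Ioo (0:ℝ) 1)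
      = Set.univ.pi (fun i => s i ∩ Set.Ioo (0:ℝ) 1) := by
    ext x; simp [Set.mem_pi, forall_and]
  rw [h, volume_pi_pi]
  exact Finset.prod_congr rfl fun i _ => (Measure.restrict_apply (hs i)).symm

lemma step (n : ℕ) (f : ℝ → ℝ≥0∞) (hf : Measurable f) :
    ∫⁻ x in Set.Ioo (0:ℝ) 1, ∫⁻ u in Set.Ioo (0:ℝ) 1,
        f (x * u) * ENNReal.ofReal ((-Real.log u) ^ n / n.factorial)
      = ∫⁻ t in Set.Ioo (0:ℝ) 1,
          f t * ENNReal.ofReal ((-Real.log t) ^ (n+1) / (n+1).factorial) := by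
  set K : ℝ → ℝ → ℝ≥0∞ := fun x t => Set.indicator (Set.Ioo 0 x)
    (fun t => ENNReal.ofReal x⁻¹ *
      (f t * ENNReal.ofReal ((Real.log x - Real.log t) ^ n / n.factorial))) t with hK
  -- Step A
  have stepA : ∀ x ∈ Set.Ioo (0:ℝ) 1,
      ∫⁻ u in Set.Ioo (0:ℝ) 1, f (x * u) * ENNReal.ofReal ((-Real.log u) ^ n / n.factorial)
        = ∫⁻ t in Set.Ioo (0:ℝ) 1, K x t := by
    intro x hx
    have hx0 : (0:ℝ) < x := hx.1
    set g : ℝ → ℝ≥0∞ := fun t =>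
      f t * ENNReal.ofReal ((Real.log x - Real.log t) ^ n / n.factorial) with hg
    have hgm : Measurable g := hf.mul
      ((((Real.measurable_log.const_sub _).pow_const n).div_const _).ennreal_ofReal)
    have hpre : (fun u : ℝ => x * u) ⁻¹' (Set.Ioo 0 x) = Set.Ioo (0:ℝ) 1 := by
      ext u
      simp only [Set.mem_preimage, Set.mem_Ioo]
      constructor
      · rintro ⟨h1, h2⟩
        constructor <;> nlinarith
      · rintro ⟨h1, h2⟩
        constructor <;> nlinarith
    have hmap : Measure.map (fun u : ℝ => x * u) (volume.restrict (Set.Ioo (0:ℝ) 1))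
        = ENNReal.ofReal x⁻¹ • volume.restrict (Set.Ioo 0 x) := by
      rw [← hpre, ← Measure.restrict_map (measurable_const_mul x) measurableSet_Ioo,
        Real.map_volume_mul_left (ne_of_gt hx0), Measure.restrict_smul,
        abs_of_pos (inv_pos.2 hx0)]
    calc ∫⁻ u in Set.Ioo (0:ℝ) 1, f (x * u) * ENNReal.ofReal ((-Real.log u) ^ n / n.factorial)
        = ∫⁻ u in Set.Ioo (0:ℝ) 1, g (x * u) := by
          apply setLIntegral_congr_fun measurableSet_Ioo
          intro u hu
          rw [hg]
          beta_reduce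
          congr 3
          rw [Real.log_mul (ne_of_gt hx0) (ne_of_gt hu.1)]
          ring
      _ = ∫⁻ t, g t ∂(Measure.map (fun u : ℝ => x * u) (volume.restrict (Set.Ioo (0:ℝ) 1))) :=
          (lintegral_map hgm (measurable_const_mul x)).symm
      _ = ENNReal.ofReal x⁻¹ * ∫⁻ t in Set.Ioo 0 x, g t := by
          rw [hmap, lintegral_smul_measure, smul_eq_mul]
      _ = ∫⁻ t in Set.Ioo 0 x, ENNReal.ofReal x⁻¹ * g t :=
          (lintegral_const_mul' _ _ ENNReal.ofReal_ne_top).symm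
      _ = ∫⁻ t in Set.Ioo (0:ℝ) 1, K x t := by
          rw [hK, lintegral_indicator measurableSet_Ioo, Measure.restrict_restrict
            measurableSet_Ioo, Set.inter_eq_self_of_subset_left
            (Set.Ioo_subset_Ioo_right hx.2.le)]
  rw [setLIntegral_congr_fun measurableSet_Ioo
    stepA]
  -- Step B : swap
  have hKm : Measurable (Function.uncurry K) := by
    have : Function.uncurry K = Set.indicator {p : ℝ × ℝ | 0 < p.2 ∧ p.2 < p.1}
        (fun p => ENNReal.ofReal (p.1)⁻¹ *
          (f p.2 * ENNReal.ofReal ((Real.log p.1 - Real.log p.2) ^ n / n.factorial))) := by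
      funext p
      rw [Function.uncurry, hK]
      simp only [Set.indicator_apply, Set.mem_Ioo, Set.mem_setOf_eq]
    rw [this]
    apply Measurable.indicator
    · exact (measurable_fst.inv.ennreal_ofReal).mul ((hf.comp measurable_snd).mul
        ((((Real.measurable_log.comp measurable_fst).sub
          (Real.measurable_log.comp measurable_snd)).pow_const n).div_const _).ennreal_ofReal)
    · exact MeasurableSet.inter (measurableSet_lt measurable_const measurable_snd)
        (measurableSet_lt measurable_snd measurable_fst)
  rw [lintegral_lintegral_swap hKm.aemeasurable]
  -- Step C
  apply setLIntegral_congr_fun measurableSet_Ioo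
  intro t ht
  have ht0 : (0:ℝ) < t := ht.1
  have hKt : ∀ x : ℝ, K x t = Set.indicator (Set.Ioi t)
      (fun x => f t * (ENNReal.ofReal x⁻¹ *
        ENNReal.ofReal ((Real.log x - Real.log t) ^ n / n.factorial))) x := by
    intro x
    rw [hK]
    simp only [Set.indicator_apply, Set.mem_Ioo, Set.mem_Ioi]
    by_cases hc : t < x
    · rw [if_pos ⟨ht0, hc⟩, if_pos hc]; ring
    · rw [if_neg (fun h => hc h.2), if_neg hc]
  simp only [hKt]
  rw [lintegral_indicator measurableSet_Ioi, Measure.restrict_restrict measurableSet_Ioi]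
  have hset : Set.Ioi t ∩ Set.Ioo (0:ℝ) 1 = Set.Ioo t 1 := by
    ext x
    simp only [Set.mem_inter_iff, Set.mem_Ioi, Set.mem_Ioo]
    constructor
    · rintro ⟨h1, _, h3⟩; exact ⟨h1, h3⟩
    · rintro ⟨h1, h2⟩; exact ⟨h1, lt_trans ht0 h1, h2⟩
  rw [hset, lintegral_const_mul _ (f := fun x : ℝ => ENNReal.ofReal x⁻¹ *
        ENNReal.ofReal ((Real.log x - Real.log t) ^ n / n.factorial)) (measurable_inv.ennreal_ofReal.mul
    ((((Real.measurable_log.sub_const _).pow_const n).div_const _).ennreal_ofReal))]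
  congr 1
  rw [← ftc_piece n ht0 ht.2]
  apply setLIntegral_congr_fun measurableSet_Ioo
  intro x hx
  beta_reduce
  rw [ENNReal.ofReal_mul (inv_nonneg.2 (lt_trans ht0 hx.1).le)]

lemma prod_density : ∀ (n : ℕ) (f : ℝ → ℝ≥0∞), Measurable f →
    ∫⁻ x, f (∏ i, x i) ∂(Measure.pi fun _ : Fin (n+1) => volume.restrict (Set.Ioo (0:ℝ) 1))
      = ∫⁻ u in Set.Ioo (0:ℝ) 1, f u * ENNReal.ofReal ((-Real.log u) ^ n / n.factorial) := by
  intro n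
  induction n with
  | zero =>
    intro f hf
    have h := (measurePreserving_funUnique (volume.restrict (Set.Ioo (0:ℝ) 1))
      (Fin 1)).lintegral_comp hf
    simp only [MeasurableEquiv.funUnique_apply] at h
    calc ∫⁻ x, f (∏ i, x i) ∂(Measure.pi fun _ : Fin 1 => volume.restrict (Set.Ioo (0:ℝ) 1))
        = ∫⁻ x, f (x default) ∂(Measure.pi fun _ : Fin 1 => volume.restrict (Set.Ioo (0:ℝ) 1)) := by
          apply lintegral_congr
          intro x
          rw [Fin.prod_univ_one]
          rfl
      _ = ∫⁻ u in Set.Ioo (0:ℝ) 1, f u := h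
      _ = _ := by
          apply lintegral_congr
          intro u
          simp
  | succ n ih =>
    intro f hf
    have e := measurePreserving_piFinSuccAbove
      (fun _ : Fin (n+2) => volume.restrict (Set.Ioo (0:ℝ) 1)) 0
    set G : ℝ × (Fin (n+1) → ℝ) → ℝ≥0∞ := fun p => f (p.1 * ∏ j, p.2 j) with hGdef
    have hprodm : Measurable (fun p : ℝ × (Fin (n+1) → ℝ) => ∏ j, p.2 j) :=
      Finset.measurable_prod Finset.univ (fun j _ => (measurable_pi_apply j).comp measurable_snd)
    have hG : Measurable G := hf.comp (measurable_fst.mul hprodm)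
    calc ∫⁻ x, f (∏ i, x i) ∂(Measure.pi fun _ : Fin (n+2) => volume.restrict (Set.Ioo (0:ℝ) 1))
        = ∫⁻ x, G ((MeasurableEquiv.piFinSuccAbove (fun _ : Fin (n+2) => ℝ) 0) x)
            ∂(Measure.pi fun _ : Fin (n+2) => volume.restrict (Set.Ioo (0:ℝ) 1)) := by
          apply lintegral_congr
          intro x
          rw [hGdef]
          simp only [MeasurableEquiv.piFinSuccAbove_apply]
          rw [Fin.prod_univ_succAbove (fun i => x i) 0]
          rfl
      _ = ∫⁻ p, G p ∂((volume.restrict (Set.Ioo (0:ℝ) 1)).prod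
            (Measure.pi fun _ : Fin (n+1) => volume.restrict (Set.Ioo (0:ℝ) 1))) :=
          e.lintegral_comp hG
      _ = ∫⁻ x in Set.Ioo (0:ℝ) 1, ∫⁻ y, G (x, y)
            ∂(Measure.pi fun _ : Fin (n+1) => volume.restrict (Set.Ioo (0:ℝ) 1)) :=
          lintegral_prod _ hG.aemeasurable
      _ = ∫⁻ x in Set.Ioo (0:ℝ) 1, ∫⁻ u in Set.Ioo (0:ℝ) 1,
            f (x * u) * ENNReal.ofReal ((-Real.log u) ^ n / n.factorial) := by
          apply lintegral_congr
          intro x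
          exact ih (fun u => f (x * u)) (hf.comp (measurable_const_mul x))
      _ = _ := step n f hf

lemma summable_aux (m : ℕ) (hm : 1 ≤ m) : Summable (fun k : ℕ => 1 / ((k:ℝ)+1) ^ (m+1)) := by
  have h := (summable_nat_add_iff 1).mpr
    (Real.summable_one_div_nat_pow.mpr (by omega : 1 < m+1))
  apply h.congr
  intro k
  push_cast
  ring

lemma sum_lemma (v s : ℕ) (hs : 1 ≤ s) :
    ∫⁻ u in Set.Ioo (0:ℝ) 1,
        ENNReal.ofReal ((-Real.log u) ^ v / (1 - u)) *
          ENNReal.ofReal ((-Real.log u) ^ s / s.factorial)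
      = ENNReal.ofReal ((((v+s).factorial : ℝ) / (s.factorial : ℝ)) *
          ∑' k : ℕ, 1 / ((k:ℝ)+1) ^ (v+s+1)) := by
  have key : ∀ u ∈ Set.Ioo (0:ℝ) 1,
      ENNReal.ofReal ((-Real.log u) ^ v / (1 - u)) *
          ENNReal.ofReal ((-Real.log u) ^ s / s.factorial)
        = ENNReal.ofReal (1 / (s.factorial : ℝ)) *
            ∑' k : ℕ, ENNReal.ofReal (u ^ k * (-Real.log u) ^ (v+s)) := by
    intro u hu
    have hL : 0 < -Real.log u := by
      have := Real.log_neg hu.1 hu.2; linarith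
    have h1u : 0 < 1 - u := by linarith [hu.2]
    have hsummable : Summable (fun k : ℕ => u ^ k * (-Real.log u) ^ (v+s)) :=
      (summable_geometric_of_lt_one hu.1.le hu.2).mul_right _
    have htsum : (∑' k : ℕ, u ^ k * (-Real.log u) ^ (v+s))
        = (-Real.log u) ^ (v+s) * (1-u)⁻¹ := by
      rw [tsum_mul_right, tsum_geometric_of_lt_one hu.1.le hu.2]
      ring
    rw [← ENNReal.ofReal_tsum_of_nonneg
      (fun k => mul_nonneg (pow_nonneg hu.1.le k) (pow_nonneg hL.le _)) hsummable, htsum,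
      ← ENNReal.ofReal_mul (div_nonneg (pow_nonneg hL.le v) h1u.le),
      ← ENNReal.ofReal_mul (by positivity : (0:ℝ) ≤ 1 / (s.factorial:ℝ))]
    congr 1
    rw [pow_add]
    field_simp
  rw [setLIntegral_congr_fun measurableSet_Ioo key]
  rw [lintegral_const_mul' _ _ ENNReal.ofReal_ne_top]
  rw [lintegral_tsum (fun k : ℕ =>
    (Measurable.ennreal_ofReal ((measurable_id.pow_const k).mul (Real.measurable_log.neg.pow_const (v+s))) :
      Measurable (fun u : ℝ => ENNReal.ofReal (u ^ k * (-Real.log u) ^ (v+s)))).aemeasurable)]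
  simp_rw [lmoment]
  rw [← ENNReal.ofReal_tsum_of_nonneg (fun k => by positivity)
    (((summable_aux (v+s) (by omega)).mul_left ((v+s).factorial : ℝ)).congr
      (fun k => by field_simp))]
  rw [← ENNReal.ofReal_mul (by positivity)]
  congr 1
  have : (∑' k : ℕ, ((v+s).factorial : ℝ) / ((k:ℝ)+1) ^ (v+s+1))
      = ((v+s).factorial : ℝ) * ∑' k : ℕ, 1 / ((k:ℝ)+1) ^ (v+s+1) := by
    rw [← tsum_mul_left]
    congr 1
    funext k
    field_simp
  rw [this]
  have hfac : (0:ℝ) < s.factorial := by positivity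
  field_simp

end Stmt9Aux

open Stmt9Aux in
theorem stmt_9 (r : ℕ) (hr : 2 ≤ r) (v : ℕ) :
    ((∫ x in Set.univ.pi (fun _ : Fin r => Set.Ioo (0:ℝ) 1),
        (-Real.log (∏ i, x i)) ^ v / (1 - ∏ i, x i) : ℝ) : ℂ) =
      ((v + r - 1).factorial : ℂ) / ((r - 1).factorial : ℂ) * riemannZeta (v + r) := by
  obtain ⟨s, rfl⟩ : ∃ s, r = s + 1 := ⟨r - 1, by omega⟩
  have hs : 1 ≤ s := by omega
  set Z : ℝ := ∑' k : ℕ, 1 / ((k:ℝ)+1) ^ (v+s+1) with hZ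
  have hZ0 : 0 ≤ Z := tsum_nonneg (fun k => by positivity)
  have hprodm : Measurable (fun x : Fin (s+1) → ℝ => ∏ i, x i) :=
    Finset.measurable_prod Finset.univ (fun i _ => measurable_pi_apply i)
  have hFm : Measurable (fun x : Fin (s+1) → ℝ =>
      (-Real.log (∏ i, x i)) ^ v / (1 - ∏ i, x i)) :=
    (((Real.measurable_log.comp hprodm).neg.pow_const v).div
      (measurable_const.sub hprodm))
  have hreal : (∫ x in Set.univ.pi (fun _ : Fin (s+1) => Set.Ioo (0:ℝ) 1),
      (-Real.log (∏ i, x i)) ^ v / (1 - ∏ i, x i))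
      = (((v+s).factorial : ℝ) / (s.factorial : ℝ)) * Z := by
    have hSmeas : MeasurableSet (Set.univ.pi fun _ : Fin (s+1) => Set.Ioo (0:ℝ) 1) :=
      MeasurableSet.univ_pi (fun _ => measurableSet_Ioo)
    have hnn : 0 ≤ᵐ[volume.restrict (Set.univ.pi fun _ : Fin (s+1) => Set.Ioo (0:ℝ) 1)]
        (fun x : Fin (s+1) → ℝ => (-Real.log (∏ i, x i)) ^ v / (1 - ∏ i, x i)) := by
      filter_upwards [ae_restrict_mem hSmeas] with x hx
      have hpos : 0 < ∏ i, x i := Finset.prod_pos (fun i _ => (hx i (Set.mem_univ i)).1)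
      have hle : ∏ i, x i ≤ 1 := Finset.prod_le_one
        (fun i _ => (hx i (Set.mem_univ i)).1.le) (fun i _ => (hx i (Set.mem_univ i)).2.le)
      have hlog : 0 ≤ -Real.log (∏ i, x i) := by
        have := Real.log_nonpos hpos.le hle; linarith
      have h1 : 0 ≤ 1 - ∏ i, x i := by linarith
      positivity
    rw [integral_eq_lintegral_of_nonneg_ae hnn hFm.aestronglyMeasurable]
    have hfm : Measurable (fun p : ℝ => ENNReal.ofReal ((-Real.log p) ^ v / (1 - p))) :=
      (((Real.measurable_log.neg.pow_const v).div
        (measurable_const.sub measurable_id))).ennreal_ofReal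
    have : ∫⁻ x in Set.univ.pi (fun _ : Fin (s+1) => Set.Ioo (0:ℝ) 1),
        ENNReal.ofReal ((-Real.log (∏ i, x i)) ^ v / (1 - ∏ i, x i))
        = ENNReal.ofReal ((((v+s).factorial : ℝ) / (s.factorial : ℝ)) * Z) := by
      rw [show ∫⁻ x in Set.univ.pi (fun _ : Fin (s+1) => Set.Ioo (0:ℝ) 1),
          ENNReal.ofReal ((-Real.log (∏ i, x i)) ^ v / (1 - ∏ i, x i))
          = ∫⁻ x, (fun p => ENNReal.ofReal ((-Real.log p) ^ v / (1 - p))) (∏ i, x i)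
            ∂(Measure.pi fun _ : Fin (s+1) => volume.restrict (Set.Ioo (0:ℝ) 1)) from by
        rw [← restrict_pi_cube (s+1)]]
      rw [prod_density s _ hfm]
      rw [← sum_lemma v s hs]
    rw [this, ENNReal.toReal_ofReal (by positivity)]
  rw [hreal]
  have hzeta : riemannZeta ((v:ℂ) + ((s:ℂ)+1)) = (Z : ℂ) := by
    have harg : ((v:ℂ) + ((s:ℂ)+1)) = ((v+s+1 : ℕ) : ℂ) := by push_cast; ring
    rw [harg, zeta_eq_tsum_one_div_nat_add_one_cpow (by
      rw [Complex.natCast_re]; exact_mod_cast (by omega : 1 < v+s+1))]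
    rw [hZ, Complex.ofReal_tsum]
    congr 1
    funext k
    rw [Complex.cpow_natCast]
    push_cast
    norm_num
  have hidx : v + (s + 1) - 1 = v + s := by omega
  rw [hidx]
  push_cast
  rw [hzeta]
end
end

section
/- For nonnegative integers k, v and r ≥ 1: ∫_{[0,1]^r} (x_1⋯x_r)^k (-log(x_1⋯x_r))^v dx_1⋯dx_r = (v + r - 1)! / ((r-1)! (k+1)^{v+r}). -/
open MeasureTheory

open Real Set


lemma expNeg_image : (fun t : ℝ => Real.exp (-t)) '' Set.Ioi 0 = Set.Ioo (0:ℝ) 1 := by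
  ext x
  constructor
  · rintro ⟨t, ht, rfl⟩
    exact ⟨Real.exp_pos _, Real.exp_lt_one_iff.mpr (by simpa using ht)⟩
  · rintro ⟨hx0, hx1⟩
    exact ⟨-Real.log x, by simpa using Real.log_neg hx0 hx1, by simp [Real.exp_log hx0]⟩

lemma expNeg_hasDeriv : ∀ t ∈ Set.Ioi (0:ℝ),
    HasDerivWithinAt (fun t : ℝ => Real.exp (-t)) (-Real.exp (-t)) (Set.Ioi 0) t := by
  intro t _
  have h := ((Real.hasDerivAt_exp (-t)).comp t ((hasDerivAt_id t).neg)).hasDerivWithinAt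
    (s := Set.Ioi 0)
  rw [mul_neg_one] at h
  exact h

lemma expNeg_injOn : Set.InjOn (fun t : ℝ => Real.exp (-t)) (Set.Ioi 0) := by
  intro a _ b _ h
  have := Real.exp_injective h
  linarith [neg_injective this]

lemma aux_eq (k m : ℕ) : ∀ t ∈ Set.Ioi (0:ℝ),
    |(-Real.exp (-t))| • (Real.exp (-t) ^ k * (-Real.log (Real.exp (-t))) ^ m)
      = t ^ m * Real.exp (-(((k:ℝ) + 1) * t)) := by
  intro t _
  rw [abs_neg, abs_of_pos (Real.exp_pos _), Real.log_exp, neg_neg, smul_eq_mul,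
    ← Real.exp_nat_mul]
  rw [show -(((k:ℝ) + 1) * t) = (k:ℝ) * (-t) + (-t) by ring, Real.exp_add]
  ring

lemma integrableOn_aux (k m : ℕ) :
    IntegrableOn (fun t : ℝ => t ^ m * Real.exp (-(((k:ℝ) + 1) * t))) (Set.Ioi 0) := by
  have hbase : IntegrableOn (fun x : ℝ => x ^ m * Real.exp (-x)) (Set.Ioi 0) := by
    have := Real.GammaIntegral_convergent (s := (m:ℝ) + 1) (by positivity)
    refine (integrableOn_congr_fun (fun x hx => ?_) measurableSet_Ioi).mp this
    rw [add_sub_cancel_right, Real.rpow_natCast]; ring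
  have hc : (0:ℝ) < (k:ℝ) + 1 := by positivity
  have h1 : IntegrableOn (fun t : ℝ => (((k:ℝ)+1) * t) ^ m * Real.exp (-(((k:ℝ)+1) * t)))
      (Set.Ioi 0) := by
    have := (integrableOn_Ioi_comp_mul_left_iff
      (fun x : ℝ => x ^ m * Real.exp (-x)) 0 hc).mpr (by simpa using hbase)
    simpa using this
  have h2 := h1.const_mul ((((k:ℝ)+1)) ^ m)⁻¹
  refine (integrableOn_congr_fun (fun x _ => ?_) measurableSet_Ioi).mp h2
  rw [mul_pow]
  field_simp

lemma oneDim_integrableOn (k m : ℕ) :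
    IntegrableOn (fun x : ℝ => x ^ k * (-Real.log x) ^ m) (Set.Ioo (0:ℝ) 1) := by
  rw [← expNeg_image]
  rw [integrableOn_image_iff_integrableOn_abs_deriv_smul measurableSet_Ioi
    (expNeg_hasDeriv) (expNeg_injOn)]
  exact (integrableOn_congr_fun (aux_eq k m) measurableSet_Ioi).mpr (integrableOn_aux k m)

lemma oneDim_integral (k m : ℕ) :
    ∫ x in Set.Ioo (0:ℝ) 1, x ^ k * (-Real.log x) ^ m
      = (m.factorial : ℝ) / ((k:ℝ) + 1) ^ (m + 1) := by
  rw [← expNeg_image, integral_image_eq_integral_abs_deriv_smul measurableSet_Ioi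
    (expNeg_hasDeriv) (expNeg_injOn),
    setIntegral_congr_fun measurableSet_Ioi (aux_eq k m)]
  have hc : (0:ℝ) < (k:ℝ) + 1 := by positivity
  have := Real.integral_rpow_mul_exp_neg_mul_Ioi (a := (m:ℝ) + 1) (r := (k:ℝ) + 1)
    (by positivity) hc
  rw [setIntegral_congr_fun measurableSet_Ioi (g := fun t : ℝ =>
      t ^ ((m:ℝ) + 1 - 1) * Real.exp (-(((k:ℝ)+1) * t))) ?_, this]
  · rw [Real.Gamma_nat_eq_factorial, show ((m:ℝ)+1) = ((m+1:ℕ):ℝ) by push_cast; ring,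
      Real.rpow_natCast, one_div, inv_pow, inv_mul_eq_div]
  · intro t ht
    simp only [add_sub_cancel_right, Real.rpow_natCast]

-- Nat identity: (∑ j ≤ v, C(v,j)(j+r)!(v-j)!) * (r+1) = (v+r+1)!
lemma nat_sum_id (v r : ℕ) :
    (∑ j ∈ Finset.range (v + 1), v.choose j * (j + r).factorial * (v - j).factorial) * (r + 1)
      = (v + r + 1).factorial := by
  have hterm : ∀ j ∈ Finset.range (v + 1),
      v.choose j * (j + r).factorial * (v - j).factorial
        = v.factorial * (r.factorial * (j + r).choose r) := by
    intro j hj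
    have hjv : j ≤ v := Nat.lt_succ_iff.mp (Finset.mem_range.mp hj)
    have h1 : v.choose j * j.factorial * (v - j).factorial = v.factorial :=
      Nat.choose_mul_factorial_mul_factorial hjv
    have h2 : (j + r).choose r * r.factorial * j.factorial = (j + r).factorial := by
      have := Nat.choose_mul_factorial_mul_factorial (show r ≤ j + r by omega)
      simpa [Nat.add_sub_cancel] using this
    have hj0 : j.factorial ≠ 0 := Nat.factorial_ne_zero j
    apply Nat.eq_of_mul_eq_mul_right (Nat.pos_of_ne_zero hj0)
    calc v.choose j * (j + r).factorial * (v - j).factorial * j.factorial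
        = (v.choose j * j.factorial * (v - j).factorial) * (j + r).factorial := by ring
      _ = v.factorial * (j + r).factorial := by rw [h1]
      _ = v.factorial * (r.factorial * (j + r).choose r) * j.factorial := by
          rw [← h2]; ring
  rw [Finset.sum_congr rfl hterm, ← Finset.mul_sum, ← Finset.mul_sum,
    Nat.sum_range_add_choose]
  have h3 : (v + r + 1).choose (r + 1) * (r + 1).factorial * v.factorial
      = (v + r + 1).factorial := by
    have := Nat.choose_mul_factorial_mul_factorial (show r + 1 ≤ v + r + 1 by omega)
    simpa [show v + r + 1 - (r + 1) = v by omega] using this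
  calc v.factorial * (r.factorial * (v + r + 1).choose (r + 1)) * (r + 1)
      = (v + r + 1).choose (r + 1) * (r.factorial * (r + 1)) * v.factorial := by ring
    _ = (v + r + 1).choose (r + 1) * (r + 1).factorial * v.factorial := by
        rw [Nat.factorial_succ (r)]; ring_nf
    _ = (v + r + 1).factorial := h3

lemma main_lemma (k : ℕ) : ∀ r v : ℕ,
    IntegrableOn (fun x : Fin (r+1) → ℝ => (∏ i, x i) ^ k * (-Real.log (∏ i, x i)) ^ v)
      (Set.univ.pi fun _ : Fin (r+1) => Set.Ioo (0:ℝ) 1) ∧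
    ∫ x in Set.univ.pi (fun _ : Fin (r+1) => Set.Ioo (0:ℝ) 1),
        (∏ i, x i) ^ k * (-Real.log (∏ i, x i)) ^ v
      = ((v + r).factorial : ℝ) / ((r.factorial : ℝ) * ((k:ℝ) + 1) ^ (v + r + 1)) := by
  intro r
  induction r with
  | zero =>
    intro v
    set g : (Fin 1 → ℝ) → ℝ :=
      fun x => (∏ i, x i) ^ k * (-Real.log (∏ i, x i)) ^ v with hg
    have hmp : MeasurePreserving (MeasurableEquiv.funUnique (Fin 1) ℝ).symm volume volume :=
      (volume_preserving_funUnique (Fin 1) ℝ).symm _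
    have hemb : MeasurableEmbedding (MeasurableEquiv.funUnique (Fin 1) ℝ).symm :=
      (MeasurableEquiv.funUnique (Fin 1) ℝ).symm.measurableEmbedding
    have hpre : (MeasurableEquiv.funUnique (Fin 1) ℝ).symm ⁻¹'
        (Set.univ.pi fun _ : Fin 1 => Set.Ioo (0:ℝ) 1) = Set.Ioo (0:ℝ) 1 := by
      ext y
      simp [MeasurableEquiv.funUnique, Set.mem_pi]
    have hcomp : ∀ y : ℝ, g ((MeasurableEquiv.funUnique (Fin 1) ℝ).symm y)
        = y ^ k * (-Real.log y) ^ v := by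
      intro y
      simp [hg, MeasurableEquiv.funUnique, Fin.prod_univ_one]
    constructor
    · have h1 := (hmp.restrict_preimage_emb hemb
        (Set.univ.pi fun _ : Fin 1 => Set.Ioo (0:ℝ) 1)).integrable_comp_emb hemb (g := g)
      refine h1.mp ?_
      rw [hpre]
      exact (integrableOn_congr_fun (fun y _ => hcomp y) measurableSet_Ioo).mpr
        (oneDim_integrableOn k v)
    · have h2 := hmp.setIntegral_preimage_emb hemb g
        (Set.univ.pi fun _ : Fin 1 => Set.Ioo (0:ℝ) 1)
      rw [← h2, hpre, setIntegral_congr_fun measurableSet_Ioo (fun y _ => hcomp y),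
        oneDim_integral k v]
      simp
  | succ r ih =>
    intro v
    set S' : Set (Fin (r+1) → ℝ) := Set.univ.pi fun _ => Set.Ioo (0:ℝ) 1 with hS'
    set S : Set (Fin (r+2) → ℝ) := Set.univ.pi fun _ => Set.Ioo (0:ℝ) 1 with hS
    have hS'meas : MeasurableSet S' := MeasurableSet.univ_pi fun _ => measurableSet_Ioo
    have hSmeas : MeasurableSet S := MeasurableSet.univ_pi fun _ => measurableSet_Ioo
    set g : (Fin (r+2) → ℝ) → ℝ :=
      fun x => (∏ i, x i) ^ k * (-Real.log (∏ i, x i)) ^ v with hg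
    set T := MeasurableEquiv.piFinSuccAbove (fun _ : Fin (r+2) => ℝ) 0 with hT
    have hmp : MeasurePreserving T.symm volume volume :=
      (volume_preserving_piFinSuccAbove (fun _ : Fin (r+2) => ℝ) 0).symm _
    have hemb : MeasurableEmbedding T.symm := T.symm.measurableEmbedding
    have hsymm : ∀ (y : ℝ) (p : Fin (r+1) → ℝ), T.symm (y, p) = Fin.insertNth 0 y p := by
      intro y p
      rfl
    have hpre : T.symm ⁻¹' S = Set.Ioo (0:ℝ) 1 ×ˢ S' := by
      ext ⟨y, p⟩
      simp only [Set.mem_preimage, hS, hS', Set.mem_pi, Set.mem_univ, forall_true_left,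
        Set.mem_prod, hsymm y p]
      rw [Fin.forall_iff_succAbove 0]
      simp [Fin.insertNth_apply_same, Fin.insertNth_apply_succAbove]
    have hprod : ∀ (y : ℝ) (p : Fin (r+1) → ℝ),
        ∏ i, (Fin.insertNth 0 y p) i = y * ∏ j, p j := by
      intro y p
      rw [Fin.prod_univ_succAbove _ 0]
      simp [Fin.insertNth_apply_same, Fin.insertNth_apply_succAbove]
    set F : ℝ × (Fin (r+1) → ℝ) → ℝ := fun z =>
      ∑ j ∈ Finset.range (v + 1), (v.choose j : ℝ) *
        ((z.1 ^ k * (-Real.log z.1) ^ (v - j)) *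
          ((∏ i, z.2 i) ^ k * (-Real.log (∏ i, z.2 i)) ^ j)) with hF
    have hEq : ∀ z ∈ Set.Ioo (0:ℝ) 1 ×ˢ S', g (T.symm z) = F z := by
      rintro ⟨y, p⟩ ⟨hy, hp⟩
      have hy0 : (0:ℝ) < y := hy.1
      have hP : (0:ℝ) < ∏ j, p j :=
        Finset.prod_pos fun j _ => (hp j (Set.mem_univ j)).1
      simp only [hg, hF, hsymm y p, hprod y p]
      rw [Real.log_mul hy0.ne' hP.ne', neg_add, add_comm (-Real.log y), add_pow,
        Finset.mul_sum]
      refine Finset.sum_congr rfl fun j hj => ?_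
      rw [mul_pow]
      ring
    have hint : ∀ j ∈ Finset.range (v + 1), Integrable (fun z : ℝ × (Fin (r+1) → ℝ) =>
        (v.choose j : ℝ) * ((z.1 ^ k * (-Real.log z.1) ^ (v - j)) *
          ((∏ i, z.2 i) ^ k * (-Real.log (∏ i, z.2 i)) ^ j)))
        ((volume.restrict (Set.Ioo (0:ℝ) 1)).prod (volume.restrict S')) := by
      intro j _
      exact (Integrable.mul_prod (oneDim_integrableOn k (v - j)) ((ih j).1)).const_mul _
    have hrestr : ((volume.restrict (Set.Ioo (0:ℝ) 1)).prod (volume.restrict S'))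
        = (volume : Measure (ℝ × (Fin (r+1) → ℝ))).restrict (Set.Ioo (0:ℝ) 1 ×ˢ S') := by
      rw [Measure.volume_eq_prod, Measure.prod_restrict]
    have hFint : Integrable F
        ((volume : Measure (ℝ × (Fin (r+1) → ℝ))).restrict (Set.Ioo (0:ℝ) 1 ×ˢ S')) := by
      rw [← hrestr]
      exact integrable_finset_sum _ hint
    constructor
    · have h1 := (hmp.restrict_preimage_emb hemb S).integrable_comp_emb hemb (g := g)
      refine h1.mp ?_
      rw [hpre]
      exact (integrable_congr (Filter.eventuallyEq_of_mem
        (self_mem_ae_restrict ((measurableSet_Ioo.prod hS'meas))) hEq)).mpr hFint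
    · have h2 := hmp.setIntegral_preimage_emb hemb g S
      rw [← h2, hpre,
        setIntegral_congr_fun (measurableSet_Ioo.prod hS'meas) hEq]
      have h3 : ∫ z in Set.Ioo (0:ℝ) 1 ×ˢ S', F z
          = ∑ j ∈ Finset.range (v + 1), (v.choose j : ℝ) *
            ((∫ y in Set.Ioo (0:ℝ) 1, y ^ k * (-Real.log y) ^ (v - j)) *
              (∫ p in S', (∏ i, p i) ^ k * (-Real.log (∏ i, p i)) ^ j)) := by
        rw [show (volume : Measure (ℝ × (Fin (r+1) → ℝ))).restrict (Set.Ioo (0:ℝ) 1 ×ˢ S')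
          = (volume.restrict (Set.Ioo (0:ℝ) 1)).prod (volume.restrict S') from hrestr.symm]
        rw [integral_finset_sum _ hint]
        refine Finset.sum_congr rfl fun j hj => ?_
        rw [integral_const_mul,
          integral_prod_mul (fun y : ℝ => y ^ k * (-Real.log y) ^ (v - j))
            (fun p : Fin (r+1) → ℝ => (∏ i, p i) ^ k * (-Real.log (∏ i, p i)) ^ j)]
      rw [h3]
      -- now the algebra
      have hc : (0:ℝ) < (k:ℝ) + 1 := by positivity
      have hterm : ∀ j ∈ Finset.range (v + 1), (v.choose j : ℝ) *
            ((∫ y in Set.Ioo (0:ℝ) 1, y ^ k * (-Real.log y) ^ (v - j)) *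
              (∫ p in S', (∏ i, p i) ^ k * (-Real.log (∏ i, p i)) ^ j))
          = ((v.choose j * (j + r).factorial * (v - j).factorial : ℕ) : ℝ) /
              ((r.factorial : ℝ) * ((k:ℝ) + 1) ^ (v + r + 2)) := by
        intro j hj
        have hjv : j ≤ v := Nat.lt_succ_iff.mp (Finset.mem_range.mp hj)
        rw [oneDim_integral k (v - j), (ih j).2]
        rw [show v + r + 2 = (v - j + 1) + (j + r + 1) by omega, pow_add]
        push_cast
        field_simp
        ring
      rw [Finset.sum_congr rfl hterm, ← Finset.sum_div, ← Nat.cast_sum]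
      have hsum : ((∑ j ∈ Finset.range (v + 1),
          v.choose j * (j + r).factorial * (v - j).factorial : ℕ) : ℝ) * ((r:ℝ) + 1)
          = ((v + r + 1).factorial : ℝ) := by
        have := nat_sum_id v r
        exact_mod_cast congrArg (Nat.cast : ℕ → ℝ) this
      have hr0 : ((r.factorial : ℝ)) ≠ 0 := Nat.cast_ne_zero.mpr (Nat.factorial_ne_zero r)
      have hcN : ((k:ℝ) + 1) ^ (v + r + 2) ≠ 0 := by positivity
      have hcne : ((k:ℝ) + 1) ≠ 0 := hc.ne'
      rw [show v + r + 1 = v + (r + 1) by omega] at hsum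
      rw [Nat.factorial_succ r, Nat.cast_mul, Nat.cast_add, Nat.cast_one,
        div_eq_div_iff (mul_ne_zero hr0 hcN)
          (mul_ne_zero (mul_ne_zero (by positivity) hr0) (pow_ne_zero _ hcne))]
      linear_combination ((r.factorial : ℝ) * ((k:ℝ) + 1) ^ (v + r + 2)) * hsum

theorem stmt_19 (r : ℕ) (hr : 1 ≤ r) (k v : ℕ) :
    ∫ x in Set.univ.pi (fun _ : Fin r => Set.Ioo (0:ℝ) 1),
        (∏ i, x i) ^ k * (-Real.log (∏ i, x i)) ^ v =
      ((v + r - 1).factorial : ℝ) / (((r - 1).factorial : ℝ) * (k + 1) ^ (v + r)) := by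
  obtain ⟨r', rfl⟩ : ∃ r', r = r' + 1 := ⟨r - 1, by omega⟩
  have h := (main_lemma k r' v).2
  rw [show v + (r' + 1) - 1 = v + r' by omega, show r' + 1 - 1 = r' by omega]
  exact h
end
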